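/- Every Bernstein function f satisfies |f^{(k)}(x)| ≤ (k!/x^k) f(x) for all integers k ≥ 0 and all x > 0. -/

import Mathlib

open MeasureTheory Set

/-- `u^k ≤ k! (e^u - 1)` for `k ≥ 1`, `u ≥ 0`. -/
lemma bern_pow_le (k : ℕ) (hk : 1 ≤ k) {u : ℝ} (hu : 0 ≤ u) :
    u ^ k ≤ (k.factorial : ℝ) * (Real.exp u - 1) := by
  have h := Real.sum_le_exp_of_nonneg hu (k + 1)
  have hsub : ({0, k} : Finset ℕ) ⊆ Finset.range (k + 1) := by
    intro i hi
    simp only [Finset.mem_insert, Finset.mem_singleton] at hi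
    rcases hi with rfl | rfl <;> simp [Finset.mem_range] <;> omega

  have h2 : ∑ i ∈ ({0, k} : Finset ℕ), u ^ i / i.factorial ≤
      ∑ i ∈ Finset.range (k + 1), u ^ i / i.factorial :=
    Finset.sum_le_sum_of_subset_of_nonneg hsub (fun i _ _ => by positivity)
  rw [Finset.sum_pair (by omega : (0:ℕ) ≠ k)] at h2
  simp only [pow_zero, Nat.factorial_zero, Nat.cast_one, div_one] at h2
  have h3 : 1 + u ^ k / k.factorial ≤ Real.exp u := h2.trans h
  have hfac : (0:ℝ) < k.factorial := by positivity
  have h4 : u ^ k / (k.factorial : ℝ) ≤ Real.exp u - 1 := by linarith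
  calc u ^ k = (k.factorial : ℝ) * (u ^ k / k.factorial) := by field_simp
    _ ≤ (k.factorial : ℝ) * (Real.exp u - 1) :=
        mul_le_mul_of_nonneg_left h4 hfac.le

/-- `s^k e^{-sx} ≤ (k!/x^k)(1 - e^{-sx})` for `s ≥ 0`, `x > 0`, `k ≥ 1`. -/
lemma bern_key (k : ℕ) (hk : 1 ≤ k) {s x : ℝ} (hs : 0 ≤ s) (hx : 0 < x) :
    s ^ k * Real.exp (-(s * x)) ≤
      (k.factorial : ℝ) / x ^ k * (1 - Real.exp (-(s * x))) := by
  have hu : 0 ≤ s * x := by positivity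
  have h1 := bern_pow_le k hk hu
  have hE : Real.exp (s * x) * Real.exp (-(s * x)) = 1 := by
    rw [← Real.exp_add]; simp
  have hepos : 0 < Real.exp (-(s * x)) := Real.exp_pos _
  rw [div_mul_eq_mul_div, le_div_iff₀ (by positivity : (0:ℝ) < x ^ k)]
  have hmp : (s * x) ^ k = s ^ k * x ^ k := mul_pow s x k
  nlinarith [mul_le_mul_of_nonneg_right h1 hepos.le]

/-- `min 1 s` is integrable on `(0,∞)`. -/
lemma bern_int_min (μ : Measure ℝ)
    (hμ : ∫⁻ s in Set.Ioi (0 : ℝ), ENNReal.ofReal (min 1 s) ∂μ < ⊤) :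
    Integrable (fun s => min 1 s) (μ.restrict (Set.Ioi 0)) := by
  refine ⟨(measurable_const.min measurable_id).aestronglyMeasurable, ?_⟩
  rw [hasFiniteIntegral_iff_norm]
  have : ∫⁻ s in Set.Ioi (0:ℝ), ENNReal.ofReal ‖min 1 s‖ ∂μ
      = ∫⁻ s in Set.Ioi (0:ℝ), ENNReal.ofReal (min 1 s) ∂μ := by
    refine setLIntegral_congr_fun measurableSet_Ioi (fun s hs => ?_)
    rw [Real.norm_of_nonneg (le_min zero_le_one (le_of_lt hs))]
  rwa [this]

/-- Integrability criterion on `(0,∞)` via a `C * min 1 s` bound. -/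
lemma bern_int_of_bound (μ : Measure ℝ)
    (hμ : ∫⁻ s in Set.Ioi (0 : ℝ), ENNReal.ofReal (min 1 s) ∂μ < ⊤)
    (g : ℝ → ℝ) (hg : AEStronglyMeasurable g (μ.restrict (Set.Ioi 0)))
    (C : ℝ) (hC : ∀ s : ℝ, 0 < s → |g s| ≤ C * min 1 s) :
    Integrable g (μ.restrict (Set.Ioi 0)) := by
  refine Integrable.mono' ((bern_int_min μ hμ).const_mul C) hg ?_
  rw [ae_restrict_iff' measurableSet_Ioi]
  exact ae_of_all _ fun s hs => hC s hs

/-- `s^n e^{-sc}` is integrable on `(0,∞)` for `n ≥ 1`, `c > 0`. -/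
lemma bern_int_pow_exp (μ : Measure ℝ)
    (hμ : ∫⁻ s in Set.Ioi (0 : ℝ), ENNReal.ofReal (min 1 s) ∂μ < ⊤)
    (n : ℕ) (hn : 1 ≤ n) {c : ℝ} (hc : 0 < c) :
    Integrable (fun s => s ^ n * Real.exp (-(s * c))) (μ.restrict (Set.Ioi 0)) := by
  refine bern_int_of_bound μ hμ _ (Continuous.aestronglyMeasurable (by fun_prop)) (max 1 ((n+1).factorial / c ^ (n+1)))
    (fun s hs => ?_)
  have he : (0:ℝ) < Real.exp (-(s * c)) := Real.exp_pos _
  have habs : |s ^ n * Real.exp (-(s * c))| = s ^ n * Real.exp (-(s * c)) := by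
    rw [abs_of_nonneg]; positivity
  rw [habs]
  rcases le_or_gt s 1 with h1 | h1
  · rw [min_eq_right h1]
    have hs1 : s ^ n ≤ s := pow_le_of_le_one hs.le h1 (by omega)
    have he1 : Real.exp (-(s * c)) ≤ 1 := Real.exp_le_one_iff.mpr (by nlinarith)
    have hC1 : (1:ℝ) ≤ max 1 ((n+1).factorial / c ^ (n+1)) := le_max_left _ _
    nlinarith [pow_nonneg hs.le n]
  · rw [min_eq_left h1.le]
    have hkey := bern_key (n+1) (by omega) hs.le hc
    have h2 : s ^ (n+1) * Real.exp (-(s * c)) ≤ (n+1).factorial / c ^ (n+1) := by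
      refine hkey.trans ?_
      have : 1 - Real.exp (-(s * c)) ≤ 1 := by linarith [he]
      have hpos : (0:ℝ) ≤ ((n+1).factorial : ℝ) / c ^ (n+1) := by positivity
      nlinarith
    have h3 : s ^ n * Real.exp (-(s * c)) ≤ s ^ (n+1) * Real.exp (-(s * c)) := by
      have : s ^ n ≤ s ^ (n+1) := pow_le_pow_right₀ h1.le (by omega)
      nlinarith
    calc s ^ n * Real.exp (-(s * c)) ≤ (n+1).factorial / c ^ (n+1) := h3.trans h2
      _ ≤ max 1 ((n+1).factorial / c ^ (n+1)) * 1 := by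
          rw [mul_one]; exact le_max_right _ _

/-- `1 - e^{-sx}` is integrable on `(0,∞)` for `x > 0`. -/
lemma bern_int_one_sub_exp (μ : Measure ℝ)
    (hμ : ∫⁻ s in Set.Ioi (0 : ℝ), ENNReal.ofReal (min 1 s) ∂μ < ⊤)
    {x : ℝ} (hx : 0 < x) :
    Integrable (fun s => 1 - Real.exp (-(s * x))) (μ.restrict (Set.Ioi 0)) := by
  refine bern_int_of_bound μ hμ _ (Continuous.aestronglyMeasurable (by fun_prop)) (1 + x) (fun s hs => ?_)
  have he : (0:ℝ) < Real.exp (-(s * x)) := Real.exp_pos _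
  have he1 : Real.exp (-(s * x)) ≤ 1 := Real.exp_le_one_iff.mpr (by nlinarith)
  rw [abs_of_nonneg (by linarith)]
  have hlin : 1 - s * x ≤ Real.exp (-(s * x)) := by
    have := Real.add_one_le_exp (-(s * x)); linarith
  rcases le_or_gt s 1 with h1 | h1
  · rw [min_eq_right h1]; nlinarith
  · rw [min_eq_left h1.le]; nlinarith

/-- Pointwise derivative of `y ↦ s^n e^{-sy}`. -/
lemma bern_hasDerivAt_pt (s : ℝ) (n : ℕ) (y : ℝ) :
    HasDerivAt (fun y => s ^ n * Real.exp (-(s * y)))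
      (-(s ^ (n+1) * Real.exp (-(s * y)))) y := by
  have h1 : HasDerivAt (fun y : ℝ => -(s * y)) (-s) y := by
    exact (((hasDerivAt_id' y).const_mul s).neg).congr_deriv (by ring)
  have h2 := (Real.hasDerivAt_exp (-(s * y))).comp y h1
  have h3 := h2.const_mul (s ^ n)
  exact h3.congr_deriv (by ring)

/-- Derivative of `G n` at `x > 0` for `n ≥ 1`. -/
lemma bern_hasDerivAt_G (μ : Measure ℝ)
    (hμ : ∫⁻ s in Set.Ioi (0 : ℝ), ENNReal.ofReal (min 1 s) ∂μ < ⊤)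
    (n : ℕ) (hn : 1 ≤ n) {x : ℝ} (hx : 0 < x) :
    HasDerivAt (fun y => ∫ s in Set.Ioi (0:ℝ), s ^ n * Real.exp (-(s * y)) ∂μ)
      (-(∫ s in Set.Ioi (0:ℝ), s ^ (n+1) * Real.exp (-(s * x)) ∂μ)) x := by
  have key := hasDerivAt_integral_of_dominated_loc_of_deriv_le
    (F := fun y s => s ^ n * Real.exp (-(s * y)))
    (F' := fun y s => -(s ^ (n+1) * Real.exp (-(s * y))))
    (x₀ := x) (s := Metric.ball x (x / 2))
    (bound := fun s => s ^ (n+1) * Real.exp (-(s * (x/2))))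
    (μ := μ.restrict (Set.Ioi 0))
    (Metric.ball_mem_nhds x (half_pos hx))
    (Filter.Eventually.of_forall fun y =>
      Continuous.aestronglyMeasurable (by fun_prop))
    (bern_int_pow_exp μ hμ n hn hx)
    (Continuous.aestronglyMeasurable (by fun_prop))
    ?_ (bern_int_pow_exp μ hμ (n+1) (by omega) (half_pos hx))
    (ae_of_all _ fun s y _ => bern_hasDerivAt_pt s n y)
  · rcases key with ⟨_, hd⟩
    rw [← integral_neg]
    exact hd
  · rw [ae_restrict_iff' measurableSet_Ioi]
    refine ae_of_all _ fun s hs y hy => ?_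
    have hs0 : (0:ℝ) < s := hs
    rw [Metric.mem_ball, Real.dist_eq, abs_lt] at hy
    have hy2 : x / 2 ≤ y := by linarith [hy.1]
    have : Real.exp (-(s * y)) ≤ Real.exp (-(s * (x/2))) :=
      Real.exp_le_exp.mpr (by nlinarith [hs0.le])
    rw [norm_neg, Real.norm_of_nonneg (by positivity)]
    have hp : (0:ℝ) ≤ s ^ (n+1) := by positivity
    nlinarith

/-- Derivative of `g(y) = ∫ (1 - e^{-sy})` at `x > 0`. -/
lemma bern_hasDerivAt_g (μ : Measure ℝ)
    (hμ : ∫⁻ s in Set.Ioi (0 : ℝ), ENNReal.ofReal (min 1 s) ∂μ < ⊤)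
    {x : ℝ} (hx : 0 < x) :
    HasDerivAt (fun y => ∫ s in Set.Ioi (0:ℝ), (1 - Real.exp (-(s * y))) ∂μ)
      (∫ s in Set.Ioi (0:ℝ), s ^ 1 * Real.exp (-(s * x)) ∂μ) x := by
  have key := hasDerivAt_integral_of_dominated_loc_of_deriv_le
    (F := fun y s => 1 - Real.exp (-(s * y)))
    (F' := fun y s => s ^ 1 * Real.exp (-(s * y)))
    (x₀ := x) (s := Metric.ball x (x / 2))
    (bound := fun s => s ^ 1 * Real.exp (-(s * (x/2))))
    (μ := μ.restrict (Set.Ioi 0))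
    (Metric.ball_mem_nhds x (half_pos hx))
    (Filter.Eventually.of_forall fun y =>
      Continuous.aestronglyMeasurable (by fun_prop))
    (bern_int_one_sub_exp μ hμ hx)
    (Continuous.aestronglyMeasurable (by fun_prop))
    ?_ (bern_int_pow_exp μ hμ 1 le_rfl (half_pos hx))
    (ae_of_all _ fun s y _ => by
      have h := (bern_hasDerivAt_pt s 0 y).neg.const_add 1
      simpa [sub_eq_add_neg] using h)
  · exact key.2
  · rw [ae_restrict_iff' measurableSet_Ioi]
    refine ae_of_all _ fun s hs y hy => ?_
    have hs0 : (0:ℝ) < s := hs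
    rw [Metric.mem_ball, Real.dist_eq, abs_lt] at hy
    have hy2 : x / 2 ≤ y := by linarith [hy.1]
    have : Real.exp (-(s * y)) ≤ Real.exp (-(s * (x/2))) :=
      Real.exp_le_exp.mpr (by nlinarith [hs0.le])
    rw [Real.norm_of_nonneg (by positivity)]
    have hp : (0:ℝ) ≤ s ^ 1 := by positivity
    nlinarith

/-- Formula for iterated derivatives of a Bernstein function. -/
lemma bern_iter (a b : ℝ) (μ : Measure ℝ)
    (hμ : ∫⁻ s in Set.Ioi (0 : ℝ), ENNReal.ofReal (min 1 s) ∂μ < ⊤)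
    (f : ℝ → ℝ)
    (hf : ∀ x : ℝ, f x = a + b * x + ∫ s in Set.Ioi (0:ℝ), (1 - Real.exp (-(s * x))) ∂μ)
    (n : ℕ) (hn : 1 ≤ n) :
    ∀ x : ℝ, 0 < x → iteratedDeriv n f x =
      (if n = 1 then b else 0) +
        (-1:ℝ) ^ (n+1) * ∫ s in Set.Ioi (0:ℝ), s ^ n * Real.exp (-(s * x)) ∂μ := by
  induction n, hn using Nat.le_induction with
  | base =>
    intro x hx
    rw [iteratedDeriv_one]
    have hfe : f = fun y => a + b * y + ∫ s in Set.Ioi (0:ℝ), (1 - Real.exp (-(s * y))) ∂μ :=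
      funext hf
    have hd : HasDerivAt f
        (b + ∫ s in Set.Ioi (0:ℝ), s ^ 1 * Real.exp (-(s * x)) ∂μ) x := by
      rw [hfe]
      have h1 : HasDerivAt (fun y : ℝ => a + b * y) b x := by
        simpa using ((hasDerivAt_id x).const_mul b).const_add a
      exact h1.add (bern_hasDerivAt_g μ hμ hx)
    rw [hd.deriv]
    simp
  | succ n hn ih =>
    intro x hx
    rw [iteratedDeriv_succ]
    have hev : iteratedDeriv n f =ᶠ[nhds x]
        fun y => (if n = 1 then b else 0) +
          (-1:ℝ) ^ (n+1) * ∫ s in Set.Ioi (0:ℝ), s ^ n * Real.exp (-(s * y)) ∂μ :=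
      Filter.eventuallyEq_of_mem (Ioi_mem_nhds hx) (fun y hy => ih y hy)
    rw [hev.deriv_eq]
    have hd := ((bern_hasDerivAt_G μ hμ n hn hx).const_mul ((-1:ℝ)^(n+1))).const_add
      (if n = 1 then b else 0)
    rw [hd.deriv, if_neg (by omega : ¬ n + 1 = 1)]
    ring


/-- Every Bernstein function `f(x) = a + bx + ∫_{(0,∞)} (1 - e^{-sx}) μ(ds)` satisfies
`|f^{(k)}(x)| ≤ (k!/x^k) f(x)` for all `k ≥ 0` and `x > 0`. -/
theorem stmt_2 (a b : ℝ) (ha : 0 ≤ a) (hb : 0 ≤ b)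
    (μ : Measure ℝ)
    (hμ : ∫⁻ s in Set.Ioi (0 : ℝ), ENNReal.ofReal (min 1 s) ∂μ < ⊤)
    (f : ℝ → ℝ)
    (hf : ∀ x : ℝ, f x = a + b * x + ∫ s in Set.Ioi (0 : ℝ), (1 - Real.exp (-(s * x))) ∂μ)
    (k : ℕ) (x : ℝ) (hx : 0 < x) :
    |iteratedDeriv k f x| ≤ (Nat.factorial k : ℝ) / x ^ k * f x := by
  have hInonneg : 0 ≤ ∫ s in Set.Ioi (0:ℝ), (1 - Real.exp (-(s * x))) ∂μ := by
    refine setIntegral_nonneg measurableSet_Ioi (fun s hs => ?_)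
    have hs0 : (0:ℝ) < s := hs
    have : Real.exp (-(s * x)) ≤ 1 := Real.exp_le_one_iff.mpr (by nlinarith)
    linarith
  have hfx : 0 ≤ f x := by rw [hf x]; nlinarith
  rcases Nat.eq_zero_or_pos k with rfl | hk
  · simpa [iteratedDeriv_zero, abs_of_nonneg hfx] using le_refl (f x)
  · set I := ∫ s in Set.Ioi (0:ℝ), (1 - Real.exp (-(s * x))) ∂μ with hI
    set G := ∫ s in Set.Ioi (0:ℝ), s ^ k * Real.exp (-(s * x)) ∂μ with hG
    have hform := bern_iter a b μ hμ f hf k hk x hx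
    have hGpos : 0 ≤ G := by
      refine setIntegral_nonneg measurableSet_Ioi (fun s hs => ?_)
      have hs0 : (0:ℝ) < s := hs
      positivity
    have hc : 0 ≤ (if k = 1 then b else 0) := by split <;> simp [hb]
    have habs : |iteratedDeriv k f x| ≤ (if k = 1 then b else 0) + G := by
      rw [hform]
      calc |(if k = 1 then b else 0) + (-1:ℝ) ^ (k+1) * G|
          ≤ |(if k = 1 then b else 0)| + |(-1:ℝ) ^ (k+1) * G| := abs_add_le _ _
        _ = (if k = 1 then b else 0) + G := by
            rw [abs_of_nonneg hc, abs_mul, abs_pow, abs_neg, abs_one, one_pow, one_mul,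
              abs_of_nonneg hGpos]
    have hGle : G ≤ (k.factorial : ℝ) / x ^ k * I := by
      have hmono := setIntegral_mono_on (bern_int_pow_exp μ hμ k hk hx)
        ((bern_int_one_sub_exp μ hμ hx).const_mul ((k.factorial : ℝ) / x ^ k))
        measurableSet_Ioi
        (fun s hs => bern_key k hk (le_of_lt (by exact hs : (0:ℝ) < s)) hx)
      rwa [integral_const_mul] at hmono
    have hb1 : (if k = 1 then b else 0) ≤ (k.factorial : ℝ) / x ^ k * (a + b * x) := by
      split
      · next h =>
          subst h
          have hxx : (Nat.factorial 1 : ℝ) / x ^ 1 * (a + b * x) = a / x + b := by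
            field_simp
            simp
          rw [hxx]
          have : 0 ≤ a / x := by positivity
          linarith
      · positivity
    have hsplit : (k.factorial : ℝ) / x ^ k * (a + b * x + I)
        = (k.factorial : ℝ) / x ^ k * (a + b * x) + (k.factorial : ℝ) / x ^ k * I := by
      ring
    rw [hf x, ← hI, hsplit]
    linarith
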